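/- Let G be a finite simple graph, X a subset of V(G), and let G' be the graph obtained from G by subdividing exactly once every edge of G with both endpoints in X. Then for every natural number ℓ: G has a ½-shallow topological minor H with vertex set X, the identity map on X as nail map, and exactly ℓ edges, if and only if the auxiliary bipartite graph Ĝ(G',X) has a matching of cardinality ℓ. -/

import Mathlib

/-- Vertex set of the auxiliary bipartite graph `Ĝ(G,X)`: one side is `V(G) ∖ X`,
the other side is the set of unordered pairs of distinct vertices of `X`. -/
def AuxV (V : Type*) (X : Set V) : Type _ :=
  {v : V // v ∉ X} ⊕ {p : Sym2 V // ¬ p.IsDiag ∧ ∀ x ∈ p, x ∈ X}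

/-- The auxiliary bipartite graph `Ĝ(G,X)`: a vertex `v ∈ V(G) ∖ X` is adjacent to a
pair `{x,y}` of distinct vertices of `X` iff `v` is adjacent in `G` to both `x` and `y`. -/
def auxGraph {V : Type*} (G : SimpleGraph V) (X : Set V) : SimpleGraph (AuxV V X) :=
  SimpleGraph.fromRel (fun a b =>
    ∃ (v : {v : V // v ∉ X}) (p : {p : Sym2 V // ¬ p.IsDiag ∧ ∀ x ∈ p, x ∈ X}),
      a = Sum.inl v ∧ b = Sum.inr p ∧ ∀ x ∈ (p : Sym2 V), G.Adj (v : V) x)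

/-- `G` has a matching of cardinality `ℓ`. -/
def HasMatchingOfSize {W : Type*} (G : SimpleGraph W) (ℓ : ℕ) : Prop :=
  ∃ M : G.Subgraph, M.IsMatching ∧ M.edgeSet.ncard = ℓ

/-- The maximum matching number `ν(G)`. -/
noncomputable def matchingNumber {W : Type*} (G : SimpleGraph W) : ℕ :=
  sSup {ℓ : ℕ | HasMatchingOfSize G ℓ}

/-- `H` (a graph with vertex set `X`) appears as a `1`-subdivision in `G` with the
identity map on `X` as its nail map: every edge of `H` has both endpoints in `X`, and
there is an injective choice of subdivision vertices outside `X`, one per edge of `H`,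
each adjacent in `G` to both endpoints of its edge. -/
def Appears1SubdivId {V : Type*} (G H : SimpleGraph V) (X : Set V) : Prop :=
  (∀ v ∈ H.support, v ∈ X) ∧
  ∃ s : H.edgeSet → V, Function.Injective s ∧ (∀ e, s e ∉ X) ∧
    ∀ (e : H.edgeSet), ∀ v ∈ (e : Sym2 V), G.Adj (s e) v

/-- `H` (a graph with vertex set `X`) is a `½`-shallow topological minor of `G` with
the identity map on `X` as nail map: for each edge `uv` of `H`, either `uv` is an edge
of `G`, or there is a subdivision vertex outside `X` adjacent in `G` to both `u` and
`v`, these subdivision vertices being pairwise distinct. -/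
def HalfShallowTMId {V : Type*} (G H : SimpleGraph V) (X : Set V) : Prop :=
  (∀ v ∈ H.support, v ∈ X) ∧
  ∃ s : H.edgeSet → Option V,
    (∀ e₁ e₂ w, s e₁ = some w → s e₂ = some w → e₁ = e₂) ∧
    (∀ e w, s e = some w → w ∉ X ∧ ∀ v ∈ (e : Sym2 V), G.Adj w v) ∧
    (∀ e, s e = none → (e : Sym2 V) ∈ G.edgeSet)

/-- The graph `G'` obtained from `G` by subdividing exactly once every edge of `G`
with both endpoints in `X`: vertex set `V ⊕ {edges of G inside X}`. -/
def SubdivInV (V : Type*) (G : SimpleGraph V) (X : Set V) : Type _ :=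
  V ⊕ {e : Sym2 V // e ∈ G.edgeSet ∧ ∀ v ∈ e, v ∈ X}

/-- The graph obtained from `G` by subdividing exactly once every edge with both
endpoints in `X`. -/
def subdivIn {V : Type*} (G : SimpleGraph V) (X : Set V) : SimpleGraph (SubdivInV V G X) :=
  SimpleGraph.fromRel (fun a b =>
    (∃ u v : V, a = Sum.inl u ∧ b = Sum.inl v ∧ G.Adj u v ∧ ¬(u ∈ X ∧ v ∈ X)) ∨
    (∃ (u : V) (e : {e : Sym2 V // e ∈ G.edgeSet ∧ ∀ v ∈ e, v ∈ X}),
      a = Sum.inl u ∧ b = Sum.inr e ∧ u ∈ (e : Sym2 V)))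


section Helpers

variable {V : Type} {G : SimpleGraph V} {X : Set V}

lemma subdiv_adj_out {w u : V} (hw : w ∉ X) (h : G.Adj w u) :
    (subdivIn G X).Adj (Sum.inl w) (Sum.inl u) := by
  rw [subdivIn]; erw [SimpleGraph.fromRel_adj]
  refine ⟨?_, Or.inl (Or.inl ⟨w, u, rfl, rfl, h, fun hx => hw hx.1⟩)⟩
  exact fun he => h.ne (Sum.inl_injective he)

lemma subdiv_adj_extract {w u : V} (h : (subdivIn G X).Adj (Sum.inl w) (Sum.inl u)) :
    G.Adj w u := by
  rw [subdivIn] at h; erw [SimpleGraph.fromRel_adj] at h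
  rcases h.2 with (⟨a, b, h1, h2, h3, -⟩ | ⟨a, e, h1, h2, -⟩) |
    (⟨a, b, h1, h2, h3, -⟩ | ⟨a, e, h1, h2, -⟩)
  · erw [Sum.inl.injEq] at h1 h2; subst h1; subst h2; exact h3
  · simp at h2
  · erw [Sum.inl.injEq] at h1 h2; subst h1; subst h2; exact h3.symm
  · simp at h2

lemma subdiv_adj_inr {e : {e : Sym2 V // e ∈ G.edgeSet ∧ ∀ v ∈ e, v ∈ X}} {u : V}
    (hu : u ∈ (e : Sym2 V)) : (subdivIn G X).Adj (Sum.inr e) (Sum.inl u) := by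
  rw [subdivIn]; erw [SimpleGraph.fromRel_adj]
  exact ⟨by exact Sum.inr_ne_inl, Or.inr (Or.inr ⟨u, e, rfl, rfl, hu⟩)⟩

lemma subdiv_adj_inr_extract {e : {e : Sym2 V // e ∈ G.edgeSet ∧ ∀ v ∈ e, v ∈ X}} {u : V}
    (h : (subdivIn G X).Adj (Sum.inr e) (Sum.inl u)) : u ∈ (e : Sym2 V) := by
  rw [subdivIn] at h; erw [SimpleGraph.fromRel_adj] at h
  rcases h.2 with (⟨a, b, h1, -, -⟩ | ⟨a, f, h1, -, -⟩) |
    (⟨a, b, -, h2, -⟩ | ⟨a, f, h1, h2, h3⟩)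
  · simp at h1
  · simp at h1
  · simp at h2
  · erw [Sum.inl.injEq] at h1
    erw [Sum.inr.injEq] at h2
    subst h1; subst h2; exact h3

lemma aux_adj_mk {W : Type} {Gr : SimpleGraph W} {Y : Set W}
    (v : {v : W // v ∉ Y}) (p : {p : Sym2 W // ¬ p.IsDiag ∧ ∀ x ∈ p, x ∈ Y})
    (h : ∀ x ∈ (p : Sym2 W), Gr.Adj (v : W) x) :
    (auxGraph Gr Y).Adj (Sum.inl v) (Sum.inr p) := by
  rw [auxGraph]; erw [SimpleGraph.fromRel_adj]
  exact ⟨by exact Sum.inl_ne_inr, Or.inl ⟨v, p, rfl, rfl, h⟩⟩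

lemma aux_adj_extract {W : Type} {Gr : SimpleGraph W} {Y : Set W} {a b : AuxV W Y}
    (h : (auxGraph Gr Y).Adj a b) :
    ∃ v p, (a = Sum.inl v ∧ b = Sum.inr p ∨ b = Sum.inl v ∧ a = Sum.inr p) ∧
      ∀ x ∈ (p : Sym2 W), Gr.Adj (v : W) x := by
  rw [auxGraph] at h; erw [SimpleGraph.fromRel_adj] at h
  rcases h.2 with ⟨v, p, h1, h2, h3⟩ | ⟨v, p, h1, h2, h3⟩
  · exact ⟨v, p, Or.inl ⟨h1, h2⟩, h3⟩
  · exact ⟨v, p, Or.inr ⟨h1, h2⟩, h3⟩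

lemma mem_X_of_mem_edge {H : SimpleGraph V}
    (hsupp : ∀ v ∈ H.support, v ∈ X) {e : Sym2 V} (he : e ∈ H.edgeSet) :
    ∀ u ∈ e, u ∈ X := by
  induction e using Sym2.ind with
  | _ x y =>
    rw [SimpleGraph.mem_edgeSet] at he
    intro u hu
    rw [Sym2.mem_iff] at hu
    rcases hu with rfl | rfl
    · exact hsupp u (H.mem_support.mpr ⟨y, he⟩)
    · exact hsupp u (H.mem_support.mpr ⟨x, he.symm⟩)

lemma pair_prop {H : SimpleGraph V}
    (hsupp : ∀ v ∈ H.support, v ∈ X) (e : H.edgeSet) :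
    ¬ (Sym2.map Sum.inl (e : Sym2 V) : Sym2 (SubdivInV V G X)).IsDiag ∧
      ∀ x ∈ Sym2.map (Sum.inl : V → SubdivInV V G X) (e : Sym2 V),
        x ∈ (Sum.inl '' X : Set (SubdivInV V G X)) := by
  constructor
  · intro hd
    exact H.not_isDiag_of_mem_edgeSet e.2 ((Sym2.isDiag_map Sum.inl_injective).mp hd)
  · intro x hx
    rw [Sym2.mem_map] at hx
    obtain ⟨u, hu, rfl⟩ := hx
    exact ⟨u, mem_X_of_mem_edge hsupp e.2 u hu, rfl⟩

end Helpers

lemma stmt_3_forward {V : Type} (G : SimpleGraph V) (X : Set V)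
    (H : SimpleGraph V) (hH : HalfShallowTMId G H X) :
    HasMatchingOfSize (auxGraph (subdivIn G X) (Sum.inl '' X)) H.edgeSet.ncard := by
  classical
  obtain ⟨hsupp, s, hs_inj, hs_some, hs_none⟩ := hH
  have key : ∀ e : H.edgeSet, ∃ c : SubdivInV V G X,
      (c ∉ (Sum.inl '' X : Set (SubdivInV V G X))) ∧
      (∀ u ∈ (e : Sym2 V), (subdivIn G X).Adj c (Sum.inl u)) ∧
      ((∃ w, s e = some w ∧ c = Sum.inl w) ∨
        (s e = none ∧ ∃ he, c = Sum.inr ⟨(e : Sym2 V), he⟩)) := by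
    intro e
    cases hse : s e with
    | some w =>
      obtain ⟨hwX, hadj⟩ := hs_some e w hse
      refine ⟨Sum.inl w, ?_, ?_, Or.inl ⟨w, rfl, rfl⟩⟩
      · rintro ⟨x, hx, hxe⟩
        erw [Sum.inl.injEq] at hxe
        exact hwX (hxe ▸ hx)
      · intro u hu
        exact subdiv_adj_out hwX (hadj u hu)
    | none =>
      have heG : (e : Sym2 V) ∈ G.edgeSet := hs_none e hse
      have hin : ∀ v ∈ (e : Sym2 V), v ∈ X := mem_X_of_mem_edge hsupp e.2
      refine ⟨Sum.inr ⟨(e : Sym2 V), heG, hin⟩, ?_, ?_, Or.inr ⟨rfl, ⟨heG, hin⟩, rfl⟩⟩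
      · rintro ⟨x, hx, hxe⟩
        simp at hxe
      · intro u hu
        exact subdiv_adj_inr hu
  choose c hcX hcadj hcspec using key
  have hc_inj : Function.Injective c := by
    intro e₁ e₂ h
    rcases hcspec e₁ with ⟨w₁, hs₁, hcv₁⟩ | ⟨hs₁, he₁, hcv₁⟩ <;>
      rcases hcspec e₂ with ⟨w₂, hs₂, hcv₂⟩ | ⟨hs₂, he₂, hcv₂⟩
    · rw [hcv₁, hcv₂] at h; erw [Sum.inl.injEq] at h
      subst h
      exact hs_inj e₁ e₂ w₁ hs₁ hs₂
    · rw [hcv₁, hcv₂] at h; simp at h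
    · rw [hcv₁, hcv₂] at h; simp at h
    · rw [hcv₁, hcv₂] at h; erw [Sum.inr.injEq, Subtype.mk.injEq] at h
      exact Subtype.ext h
  let L : H.edgeSet → AuxV (SubdivInV V G X) (Sum.inl '' X) :=
    fun e => Sum.inl ⟨c e, hcX e⟩
  let R : H.edgeSet → AuxV (SubdivInV V G X) (Sum.inl '' X) :=
    fun e => Sum.inr ⟨Sym2.map Sum.inl (e : Sym2 V), pair_prop hsupp e⟩
  have hL_inj : Function.Injective L := by
    intro e₁ e₂ h
    exact hc_inj (congrArg Subtype.val (Sum.inl_injective h))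
  have hR_inj : Function.Injective R := by
    intro e₁ e₂ h
    exact Subtype.ext (Sym2.map.injective Sum.inl_injective
      (congrArg Subtype.val (Sum.inr_injective h)))
  have hLneR : ∀ e₁ e₂, L e₁ ≠ R e₂ := by
    intro e₁ e₂ h
    exact Sum.inl_ne_inr h
  have hLR : ∀ e, (auxGraph (subdivIn G X) (Sum.inl '' X)).Adj (L e) (R e) := by
    intro e
    refine aux_adj_mk _ _ ?_
    intro x hx
    erw [Sym2.mem_map] at hx
    obtain ⟨u, hu, rfl⟩ := hx
    exact hcadj e u hu
  let M : (auxGraph (subdivIn G X) (Sum.inl '' X)).Subgraph :=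
    { verts := Set.range L ∪ Set.range R
      Adj := fun a b => ∃ e : H.edgeSet, (a = L e ∧ b = R e) ∨ (a = R e ∧ b = L e)
      adj_sub := by
        rintro a b ⟨e, ⟨rfl, rfl⟩ | ⟨rfl, rfl⟩⟩
        exacts [hLR e, (hLR e).symm]
      edge_vert := by
        rintro a b ⟨e, ⟨rfl, -⟩ | ⟨rfl, -⟩⟩
        exacts [Or.inl ⟨e, rfl⟩, Or.inr ⟨e, rfl⟩]
      symm := by
        refine ⟨?_⟩
        rintro a b ⟨e, ⟨rfl, rfl⟩ | ⟨rfl, rfl⟩⟩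
        exacts [⟨e, Or.inr ⟨rfl, rfl⟩⟩, ⟨e, Or.inl ⟨rfl, rfl⟩⟩] }
  refine ⟨M, ?_, ?_⟩
  · rintro a (⟨e, rfl⟩ | ⟨e, rfl⟩)
    · refine ⟨R e, ⟨e, Or.inl ⟨rfl, rfl⟩⟩, ?_⟩
      rintro b ⟨e', ⟨he', rfl⟩ | ⟨he', rfl⟩⟩
      · rw [hL_inj he']
      · exact absurd he' (hLneR e e')
    · refine ⟨L e, ⟨e, Or.inr ⟨rfl, rfl⟩⟩, ?_⟩
      rintro b ⟨e', ⟨he', rfl⟩ | ⟨he', rfl⟩⟩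
      · exact absurd he'.symm (hLneR e' e)
      · rw [hR_inj he']
  · have hF : Function.Bijective (fun e : H.edgeSet =>
        (⟨s(L e, R e), SimpleGraph.Subgraph.mem_edgeSet.mpr ⟨e, Or.inl ⟨rfl, rfl⟩⟩⟩ :
          M.edgeSet)) := by
      constructor
      · intro e₁ e₂ h
        rw [Subtype.mk.injEq, Sym2.eq_iff] at h
        rcases h with ⟨-, h2⟩ | ⟨h1, -⟩
        · exact hR_inj h2
        · exact absurd h1 (hLneR e₁ e₂)
      · rintro ⟨eps, hm⟩
        induction eps using Sym2.ind with
        | _ a b =>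
          rw [SimpleGraph.Subgraph.mem_edgeSet] at hm
          obtain ⟨e, ⟨rfl, rfl⟩ | ⟨rfl, rfl⟩⟩ := hm
          · exact ⟨e, rfl⟩
          · exact ⟨e, Subtype.ext Sym2.eq_swap⟩
    rw [← Nat.card_coe_set_eq, ← Nat.card_coe_set_eq]
    exact Nat.card_congr (Equiv.ofBijective _ hF).symm

lemma sym2_eq_of_mem {α : Type*} {z : Sym2 α} (hd : ¬ z.IsDiag) {w : Sym2 α}
    (h : ∀ u ∈ z, u ∈ w) : z = w := by
  induction z using Sym2.ind with
  | _ x y =>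
    have hxy : x ≠ y := by
      intro h'; exact hd (by simp [h'])
    induction w using Sym2.ind with
    | _ a b =>
      have hx := h x (by simp)
      have hy := h y (by simp)
      rw [Sym2.mem_iff] at hx hy
      rcases hx with rfl | rfl <;> rcases hy with rfl | rfl
      · exact absurd rfl hxy
      · rfl
      · exact Sym2.eq_swap
      · exact absurd rfl hxy

lemma sym2_image_rep {V : Type} {X : Set V} {G : SimpleGraph V} {z : Sym2 (SubdivInV V G X)}
    (hd : ¬ z.IsDiag) (hX : ∀ u ∈ z, u ∈ (Sum.inl '' X : Set (SubdivInV V G X))) :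
    ∃ x y : V, x ≠ y ∧ z = s(Sum.inl x, Sum.inl y) := by
  induction z using Sym2.ind with
  | _ a b =>
    obtain ⟨x, -, rfl⟩ := hX a (Sym2.mem_mk_left a b)
    obtain ⟨y, -, rfl⟩ := hX b (Sym2.mem_mk_right _ b)
    refine ⟨x, y, ?_, rfl⟩
    intro h
    exact hd (Sym2.mk_isDiag_iff.mpr (congrArg Sum.inl h))

lemma stmt_3_backward {V : Type} (G : SimpleGraph V) (X : Set V) (ℓ : ℕ)
    (h : HasMatchingOfSize (auxGraph (subdivIn G X) (Sum.inl '' X)) ℓ) :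
    ∃ H : SimpleGraph V, HalfShallowTMId G H X ∧ H.edgeSet.ncard = ℓ := by
  classical
  obtain ⟨M, hM, hMcard⟩ := h
  set H : SimpleGraph V := SimpleGraph.fromRel (fun x y =>
    ∃ (a : AuxV (SubdivInV V G X) (Sum.inl '' X))
      (p : {p : Sym2 (SubdivInV V G X) // ¬ p.IsDiag ∧
            ∀ x ∈ p, x ∈ (Sum.inl '' X : Set (SubdivInV V G X))}),
      M.Adj a (Sum.inr p) ∧ (p : Sym2 (SubdivInV V G X)) = s(Sum.inl x, Sum.inl y)) with hHdef
  have hsupp : ∀ v ∈ H.support, v ∈ X := by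
    intro v hv
    obtain ⟨w, hvw⟩ := H.mem_support.mp hv
    rw [hHdef, SimpleGraph.fromRel_adj] at hvw
    rcases hvw.2 with ⟨a, p, -, hp⟩ | ⟨a, p, -, hp⟩
    · have hm : Sum.inl v ∈ (p : Sym2 (SubdivInV V G X)) := by
        rw [hp]; exact Sym2.mem_mk_left _ _
      obtain ⟨x, hx, hxv⟩ := p.2.2 _ hm
      erw [Sum.inl.injEq] at hxv
      exact hxv ▸ hx
    · have hm : Sum.inl v ∈ (p : Sym2 (SubdivInV V G X)) := by
        rw [hp]; exact Sym2.mem_mk_right _ _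
      obtain ⟨x, hx, hxv⟩ := p.2.2 _ hm
      erw [Sum.inl.injEq] at hxv
      exact hxv ▸ hx
  let Rv : H.edgeSet → AuxV (SubdivInV V G X) (Sum.inl '' X) :=
    fun e => Sum.inr ⟨Sym2.map Sum.inl (e : Sym2 V), pair_prop hsupp e⟩
  have hRv_inj : Function.Injective Rv := by
    intro e₁ e₂ h
    exact Subtype.ext (Sym2.map.injective Sum.inl_injective
      (congrArg Subtype.val (Sum.inr_injective h)))
  have hex : ∀ e : H.edgeSet, ∃ a, M.Adj a (Rv e) := by
    intro e
    suffices h : ∃ a p', M.Adj a (Sum.inr p') ∧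
        (p' : Sym2 (SubdivInV V G X)) = Sym2.map Sum.inl (e : Sym2 V) by
      obtain ⟨a, p', hadj, hval⟩ := h
      refine ⟨a, ?_⟩
      have heq : (Sum.inr p' : AuxV (SubdivInV V G X) (Sum.inl '' X)) = Rv e :=
        congrArg Sum.inr (Subtype.ext hval)
      rwa [heq] at hadj
    obtain ⟨ev, hev⟩ := e
    revert hev
    induction ev using Sym2.ind with
    | _ x y =>
      intro hev
      have hadj : H.Adj x y := H.mem_edgeSet.mp hev
      rw [hHdef, SimpleGraph.fromRel_adj] at hadj
      rcases hadj.2 with ⟨a, p, hm, hp⟩ | ⟨a, p, hm, hp⟩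
      · exact ⟨a, p, hm, by rw [hp, Sym2.map_pair_eq]⟩
      · exact ⟨a, p, hm, by rw [hp, Sym2.map_pair_eq, Sym2.eq_swap]⟩
  choose a ha using hex
  have hshape : ∀ e : H.edgeSet, ∃ v : {c : SubdivInV V G X // c ∉ Sum.inl '' X},
      a e = Sum.inl v ∧
      ∀ u ∈ (e : Sym2 V), (subdivIn G X).Adj (v : SubdivInV V G X) (Sum.inl u) := by
    intro e
    obtain ⟨v, p, hcase, hall⟩ := aux_adj_extract (M.adj_sub (ha e))
    rcases hcase with ⟨h1, h2⟩ | ⟨h1, h2⟩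
    · have hp : (p : Sym2 (SubdivInV V G X)) = Sym2.map Sum.inl (e : Sym2 V) :=
        (congrArg Subtype.val (Sum.inr_injective h2)).symm
      refine ⟨v, h1, ?_⟩
      intro u hu
      exact hall _ (by rw [hp]; exact Sym2.mem_map.mpr ⟨u, hu, rfl⟩)
    · exact absurd h1.symm (Sum.inl_ne_inr)
  choose v hv1 hv2 using hshape
  let s : H.edgeSet → Option V := fun e => Sum.elim some (fun _ => none) (v e).val
  have hsome : ∀ e w, s e = some w → (v e).val = Sum.inl w := by
    intro e w hw
    cases hve : (v e).val with
    | inl w' =>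
      simp only [s, hve, Sum.elim_inl, Option.some.injEq] at hw
      rw [hw]
    | inr f => simp [s, hve] at hw
  have hnone : ∀ e, s e = none → ∃ f, (v e).val = Sum.inr f := by
    intro e hn
    cases hve : (v e).val with
    | inl w' => simp [s, hve] at hn
    | inr f => exact ⟨f, rfl⟩
  -- unique partner lemma
  have huniq : ∀ e₁ e₂ : H.edgeSet, a e₁ = a e₂ → e₁ = e₂ := by
    intro e₁ e₂ hae
    have hmem : a e₁ ∈ M.verts := M.edge_vert (ha e₁)
    obtain ⟨w, -, hwu⟩ := hM hmem
    have h1 := hwu _ (ha e₁)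
    have h2 := hwu _ (hae ▸ ha e₂)
    exact hRv_inj (h1.trans h2.symm)
  refine ⟨H, ⟨hsupp, s, ?_, ?_, ?_⟩, ?_⟩
  · -- injectivity on some
    intro e₁ e₂ w h1 h2
    have hv1' := hsome e₁ w h1
    have hv2' := hsome e₂ w h2
    have : v e₁ = v e₂ := Subtype.ext (hv1'.trans hv2'.symm)
    exact huniq e₁ e₂ (by rw [hv1 e₁, hv1 e₂, this])
  · -- some case properties
    intro e w hw
    have hve := hsome e w hw
    constructor
    · intro hwX
      exact (v e).2 (hve ▸ ⟨w, hwX, rfl⟩)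
    · intro u hu
      have := hv2 e u hu
      rw [hve] at this
      exact subdiv_adj_extract this
  · -- none case
    intro e hn
    obtain ⟨f, hf⟩ := hnone e hn
    have hall : ∀ u ∈ (e : Sym2 V), u ∈ (f : Sym2 V) := by
      intro u hu
      have := hv2 e u hu
      rw [hf] at this
      exact subdiv_adj_inr_extract this
    have hd : ¬ (e : Sym2 V).IsDiag := H.not_isDiag_of_mem_edgeSet e.2
    rw [sym2_eq_of_mem hd hall]
    exact f.2.1
  · -- cardinality
    have hF : Function.Bijective (fun e : H.edgeSet =>
        (⟨s(a e, Rv e), SimpleGraph.Subgraph.mem_edgeSet.mpr (ha e)⟩ : M.edgeSet)) := by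
      constructor
      · intro e₁ e₂ h
        rw [Subtype.mk.injEq, Sym2.eq_iff] at h
        rcases h with ⟨-, h2⟩ | ⟨h1, -⟩
        · exact hRv_inj h2
        · rw [hv1 e₁] at h1
          exact absurd h1 Sum.inl_ne_inr
      · rintro ⟨eps, hm⟩
        induction eps using Sym2.ind with
        | _ b₁ b₂ =>
          rw [SimpleGraph.Subgraph.mem_edgeSet] at hm
          -- reduce to the case b₁ = inl, b₂ = inr
          suffices hkey : ∀ b₁ b₂ : AuxV (SubdivInV V G X) (Sum.inl '' X), M.Adj b₁ b₂ →
              ∀ (v' : {c : SubdivInV V G X // c ∉ Sum.inl '' X})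
                (p : {p : Sym2 (SubdivInV V G X) // ¬ p.IsDiag ∧
                  ∀ x ∈ p, x ∈ (Sum.inl '' X : Set (SubdivInV V G X))}),
                b₁ = Sum.inl v' → b₂ = Sum.inr p →
                ∃ e : H.edgeSet, a e = b₁ ∧ Rv e = b₂ by
            obtain ⟨v', p, hcase, -⟩ := aux_adj_extract (M.adj_sub hm)
            rcases hcase with ⟨h1, h2⟩ | ⟨h1, h2⟩
            · obtain ⟨e, hae, hre⟩ := hkey b₁ b₂ hm v' p h1 h2
              exact ⟨e, Subtype.ext (by show s(a e, Rv e) = s(b₁, b₂); rw [hae, hre])⟩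
            · obtain ⟨e, hae, hre⟩ := hkey b₂ b₁ hm.symm v' p h1 h2
              exact ⟨e, Subtype.ext (by
                show s(a e, Rv e) = s(b₁, b₂)
                rw [hae, hre]; exact Sym2.eq_swap)⟩
          rintro b₁ b₂ hm' v' p rfl rfl
          obtain ⟨x, y, hxy, hpval⟩ := sym2_image_rep p.2.1 p.2.2
          have hHadj : H.Adj x y := by
            rw [hHdef, SimpleGraph.fromRel_adj]
            exact ⟨hxy, Or.inl ⟨Sum.inl v', p, hm', hpval⟩⟩
          refine ⟨⟨s(x, y), H.mem_edgeSet.mpr hHadj⟩, ?_, ?_⟩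
          · -- a e = inl v' by uniqueness of partner of Rv e
            set e : H.edgeSet := ⟨s(x, y), H.mem_edgeSet.mpr hHadj⟩
            have hre : Rv e = Sum.inr p := by
              refine congrArg Sum.inr (Subtype.ext ?_)
              show Sym2.map Sum.inl (e : Sym2 V) = (p : Sym2 (SubdivInV V G X))
              rw [hpval]
              exact Sym2.map_pair_eq _ x y
            have hmem : Rv e ∈ M.verts := M.edge_vert (ha e).symm
            obtain ⟨w, -, hwu⟩ := hM hmem
            have h1 := hwu _ (ha e).symm
            have h2 := hwu _ (by rw [hre]; exact hm'.symm)
            exact h1.trans h2.symm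
          · refine congrArg Sum.inr (Subtype.ext ?_)
            show Sym2.map Sum.inl (s(x, y) : Sym2 V) = (p : Sym2 (SubdivInV V G X))
            rw [hpval]
            exact Sym2.map_pair_eq _ x y
    rw [← hMcard, ← Nat.card_coe_set_eq, ← Nat.card_coe_set_eq]
    exact Nat.card_congr (Equiv.ofBijective _ hF)

/-- For a finite simple graph `G`, `X ⊆ V(G)`, and `G'` obtained from
`G` by subdividing exactly once every edge with both endpoints in `X`: for every
`ℓ : ℕ`, `G` has a `½`-shallow topological minor `H` with vertex set `X`, identity
nail map and exactly `ℓ` edges iff `Ĝ(G',X)` has a matching of cardinality `ℓ`. -/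
theorem stmt_3 {V : Type} [Fintype V] (G : SimpleGraph V) (X : Set V) (ℓ : ℕ) :
    (∃ H : SimpleGraph V, HalfShallowTMId G H X ∧ H.edgeSet.ncard = ℓ) ↔
      HasMatchingOfSize (auxGraph (subdivIn G X) (Sum.inl '' X)) ℓ := by
  constructor
  · rintro ⟨H, hH, hcard⟩
    exact hcard ▸ stmt_3_forward G X H hH
  · exact stmt_3_backward G X ℓ
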